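/- Let L denote the Lie algebra over ℚ of finitely supported strictly lower triangular ℤ×ℤ matrices. The Lie algebra homomorphism from the quotient of the free Lie algebra over ℚ on generators {f_i}_{i∈ℤ} by the Lie ideal generated by the elements ⁅f_i, ⁅f_i, f_{i+1}⁆⁆ and ⁅f_i, ⁅f_i, f_{i−1}⁆⁆ for all i ∈ ℤ, and ⁅f_i, f_j⁆ for all i, j with |i − j| > 1, determined by sending the class of f_i to E_{i+1,i}, is an isomorphism of Lie algebras. -/

import Mathlib

noncomputable def Eop (a b : ℤ) : Module.End ℚ (ℤ →₀ ℚ) :=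
  (Finsupp.lsingle a).comp (Finsupp.lapply b)

def serreRels : Set (FreeLieAlgebra ℚ ℤ) :=
  {x | ∃ i : ℤ, x = ⁅FreeLieAlgebra.of ℚ i,
      ⁅FreeLieAlgebra.of ℚ i, FreeLieAlgebra.of ℚ (i + 1)⁆⁆} ∪
  {x | ∃ i : ℤ, x = ⁅FreeLieAlgebra.of ℚ i,
      ⁅FreeLieAlgebra.of ℚ i, FreeLieAlgebra.of ℚ (i - 1)⁆⁆} ∪
  {x | ∃ i j : ℤ, 1 < |i - j| ∧ x = ⁅FreeLieAlgebra.of ℚ i, FreeLieAlgebra.of ℚ j⁆}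

attribute [local instance 100] LieRing.ofAssociativeRing

noncomputable def phiSL : FreeLieAlgebra ℚ ℤ →ₗ⁅ℚ⁆ Module.End ℚ (ℤ →₀ ℚ) :=
  FreeLieAlgebra.lift ℚ fun i : ℤ => Eop (i + 1) i

namespace SerreAux

abbrev FrL := FreeLieAlgebra ℚ ℤ

noncomputable def ff (i : ℤ) : FrL := FreeLieAlgebra.of ℚ i

noncomputable def GG : ℕ → ℤ → FrL
  | 0, b => ff b
  | n+1, b => ⁅ff (b + n + 1), GG n b⁆

noncomputable abbrev Isl : LieIdeal ℚ FrL := LieSubmodule.lieSpan ℚ FrL serreRels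

abbrev QL := FrL ⧸ Isl

noncomputable def piQ : FrL →ₗ⁅ℚ⁆ QL :=
  { (Isl : Submodule ℚ FrL).mkQ with map_lie' := rfl }

lemma piQ_eq_zero {x : FrL} (hx : x ∈ Isl) : piQ x = 0 :=
  (Submodule.Quotient.mk_eq_zero _).2 hx

noncomputable def qq (i : ℤ) : QL := piQ (ff i)

noncomputable def HH (n : ℕ) (b : ℤ) : QL := piQ (GG n b)

lemma HH_zero (b : ℤ) : HH 0 b = qq b := rfl

lemma HH_succ (n : ℕ) (b : ℤ) : HH (n+1) b = ⁅qq (b + n + 1), HH n b⁆ := by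
  rw [HH, GG, LieHom.map_lie]; rfl

lemma sq_up (i : ℤ) : ⁅qq i, ⁅qq i, qq (i+1)⁆⁆ = 0 := by
  simp only [qq, ← LieHom.map_lie]
  exact piQ_eq_zero (LieSubmodule.subset_lieSpan (Or.inl (Or.inl ⟨i, rfl⟩)))

lemma sq_down (i : ℤ) : ⁅qq i, ⁅qq i, qq (i-1)⁆⁆ = 0 := by
  simp only [qq, ← LieHom.map_lie]
  exact piQ_eq_zero (LieSubmodule.subset_lieSpan (Or.inl (Or.inr ⟨i, rfl⟩)))

lemma sq_far {i j : ℤ} (h : 1 < |i - j|) : ⁅qq i, qq j⁆ = 0 := by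
  simp only [qq, ← LieHom.map_lie]
  exact piQ_eq_zero (LieSubmodule.subset_lieSpan (Or.inr ⟨i, j, h, rfl⟩))

end SerreAux

namespace SerreAux

lemma HH_succ' (n : ℕ) (b j : ℤ) (h : j = b + n + 1) : HH (n+1) b = ⁅qq j, HH n b⁆ := by
  subst h; exact HH_succ n b

lemma sq_up' {i j : ℤ} (h : j = i + 1) : ⁅qq i, ⁅qq i, qq j⁆⁆ = 0 := by
  subst h; exact sq_up i

lemma sq_down' {i j : ℤ} (h : j = i - 1) : ⁅qq i, ⁅qq i, qq j⁆⁆ = 0 := by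
  subst h; exact sq_down i

lemma sq_far' {i j : ℤ} (h : 1 < i - j ∨ 1 < j - i) : ⁅qq i, qq j⁆ = 0 := by
  refine sq_far (lt_abs.mpr ?_)
  rcases h with h | h
  · exact Or.inl h
  · exact Or.inr (by omega)

lemma lemA : ∀ n : ℕ, ∀ b i : ℤ, ⁅qq i, HH n b⁆ =
    (if i = b + n + 1 then HH (n+1) b else 0)
      - (if i = b - 1 then HH (n+1) (b-1) else 0) := by
  intro n
  induction n using Nat.strong_induction_on with
  | _ n IH =>
  rcases n with _ | m
  · intro b i
    have e1 : HH 1 b = ⁅qq (b+1), qq b⁆ := HH_succ' 0 b (b+1) (by push_cast; ring)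
    have e2 : HH 1 (b-1) = ⁅qq b, qq (b-1)⁆ := HH_succ' 0 (b-1) b (by push_cast; ring)
    rw [HH_zero]
    rcases eq_or_ne i (b+1) with rfl | h1
    · rw [if_pos (by push_cast; ring), if_neg (by omega), e1, sub_zero]
    rcases eq_or_ne i (b-1) with rfl | h2
    · rw [if_neg (by omega), if_pos rfl, e2, zero_sub, ← lie_skew]
    rcases eq_or_ne i b with rfl | h3
    · rw [if_neg (by omega), if_neg h2, lie_self, sub_zero]
    · rw [if_neg (by omega), if_neg h2, sq_far' (by omega), sub_zero]
  · intro b i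
    have e0 : HH (m+1) b = ⁅qq (b+m+1), HH m b⁆ := HH_succ m b
    rcases eq_or_ne i (b+m+2) with rfl | h1
    · rw [if_pos (by push_cast; ring), if_neg (by omega), sub_zero,
        HH_succ' (m+1) b (b+(m:ℤ)+2) (by push_cast; ring)]
    rcases eq_or_ne i (b-1) with rfl | h2
    · rw [if_neg (by omega), if_pos rfl, zero_sub, e0, leibniz_lie,
        sq_far' (by omega), zero_lie, zero_add, IH m (by omega) b (b-1),
        if_neg (by omega), if_pos rfl, zero_sub, lie_neg,
        ← HH_succ' (m+1) (b-1) (b+(m:ℤ)+1) (by push_cast; ring)]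
    rcases eq_or_ne i (b+m+1) with rfl | h3
    · -- i = top generator index of HH (m+1) b
      rw [if_neg (by omega), if_neg (by omega), sub_zero]
      rcases m with _ | k
      · rw [e0, HH_zero]
        exact sq_down' (by push_cast; ring)
      · have hp : ⁅qq (b+(k+1:ℕ)+1), HH k b⁆ = 0 := by
          rw [IH k (by omega) b _, if_neg (by omega), if_neg (by omega), sub_zero]
        have e1 : HH (k+2) b = ⁅qq (b+(k+1:ℕ)+1), HH (k+1) b⁆ := HH_succ (k+1) b
        have e2 : HH (k+1) b = ⁅qq (b+(k:ℕ)+1), HH k b⁆ := HH_succ k b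
        have h2 : ⁅qq (b+(k+1:ℕ)+1), HH (k+1) b⁆
            = ⁅⁅qq (b+(k+1:ℕ)+1), qq (b+(k:ℕ)+1)⁆, HH k b⁆ := by
          rw [e2, leibniz_lie, hp, lie_zero, add_zero]
        rw [e1, h2, leibniz_lie, sq_down' (by push_cast; ring), zero_lie, hp, lie_zero,
          add_zero]
    rcases eq_or_ne i (b+m) with rfl | h4
    · rw [if_neg (by omega), if_neg (by omega), sub_zero]
      rcases m with _ | k
      · rw [e0, HH_zero, show (b+((0:ℕ):ℤ)) = b by push_cast; ring, leibniz_lie, lie_self, lie_zero,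
          add_zero, ← lie_skew, sq_up' rfl, neg_zero]
      · -- i = b + (k+1), the "2x = 0" case
        have hp : ⁅qq (b+(k+1:ℕ)+1), HH k b⁆ = 0 := by
          rw [IH k (by omega) b _, if_neg (by omega), if_neg (by omega), sub_zero]
        have h1' : ⁅qq (b+(k+1:ℕ)), HH (k+1) b⁆ = 0 := by
          rw [IH (k+1) (by omega) b _, if_neg (by omega), if_neg (by omega), sub_zero]
        have hi : ⁅qq (b+(k+1:ℕ)), HH k b⁆ = HH (k+1) b := by
          rw [IH k (by omega) b _, if_pos (by push_cast; ring), if_neg (by omega), sub_zero]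
        have e1 : HH (k+2) b = ⁅qq (b+(k+1:ℕ)+1), HH (k+1) b⁆ := HH_succ (k+1) b
        have hu : ⁅⁅qq (b+(k+1:ℕ)), qq (b+(k+1:ℕ)+1)⁆, qq (b+(k+1:ℕ))⁆ = 0 := by
          rw [← lie_skew, sq_up' rfl, neg_zero]
        have hub : ⁅⁅qq (b+(k+1:ℕ)), qq (b+(k+1:ℕ)+1)⁆, HH k b⁆ = - HH (k+2) b := by
          rw [lie_lie, hp, lie_zero, hi, ← e1, zero_sub]
        have key : ⁅qq (b+(k+1:ℕ)), HH (k+2) b⁆ = - ⁅qq (b+(k+1:ℕ)), HH (k+2) b⁆ := by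
          nth_rewrite 1 [e1, leibniz_lie, h1', lie_zero, add_zero, ← hi, leibniz_lie,
            hu, zero_lie, zero_add, hub, lie_neg]
          rfl
        have h2x : (2:ℚ) • ⁅qq (b+(k+1:ℕ)), HH (k+2) b⁆ = 0 := by
          rw [two_smul]; nth_rewrite 2 [key]; rw [add_neg_cancel]
        calc ⁅qq (b+(k+1:ℕ)), HH (k+2) b⁆
            = (2:ℚ)⁻¹ • ((2:ℚ) • ⁅qq (b+(k+1:ℕ)), HH (k+2) b⁆) := by
              rw [smul_smul]; norm_num
          _ = 0 := by rw [h2x, smul_zero]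
    · rw [if_neg (by omega), if_neg h2, sub_zero, e0, leibniz_lie,
        sq_far' (by omega), zero_lie, zero_add, IH m (by omega) b i,
        if_neg (by omega), if_neg h2, sub_zero, lie_zero]

end SerreAux

namespace SerreAux

lemma lemB : ∀ m n : ℕ, ∀ a b : ℤ, ⁅HH m a, HH n b⁆ =
    (if a = b + n + 1 then HH (m+n+1) b else 0)
      - (if b = a + m + 1 then HH (m+n+1) a else 0) := by
  intro m
  induction m with
  | zero =>
    intro n a b
    rw [HH_zero, lemA n b a, show (0:ℕ)+n+1 = n+1 by omega]
    congr 1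
    by_cases h : a = b - 1
    · rw [if_pos h, if_pos (show b = a + ((0:ℕ):ℤ) + 1 by push_cast; omega), h]
    · rw [if_neg h, if_neg (show ¬ (b = a + ((0:ℕ):ℤ) + 1) by push_cast; omega)]
  | succ m IHm =>
    intro n a b
    have E : ⁅HH (m+1) a, HH n b⁆
        = ⁅qq (a+(m:ℤ)+1), ⁅HH m a, HH n b⁆⁆ - ⁅HH m a, ⁅qq (a+(m:ℤ)+1), HH n b⁆⁆ := by
      rw [HH_succ m a, lie_lie]
    rw [E]
    by_cases h1 : a = b + (n:ℤ) + 1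
    · have v1 : ⁅HH m a, HH n b⁆ = HH (m+n+1) b := by
        rw [IHm n a b, if_pos h1, if_neg (show ¬ (b = a + (m:ℤ) + 1) by omega), sub_zero]
      have v2 : ⁅qq (a+(m:ℤ)+1), HH n b⁆ = 0 := by
        rw [lemA n b (a+(m:ℤ)+1), if_neg (show ¬ (a+(m:ℤ)+1 = b + (n:ℤ) + 1) by omega),
          if_neg (show ¬ (a+(m:ℤ)+1 = b - 1) by omega), sub_zero]
      have v3 : ⁅qq (a+(m:ℤ)+1), HH (m+n+1) b⁆ = HH (m+n+2) b := by
        rw [lemA (m+n+1) b (a+(m:ℤ)+1),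
          if_pos (show a+(m:ℤ)+1 = b + ((m+n+1:ℕ):ℤ) + 1 by push_cast; omega),
          if_neg (show ¬ (a+(m:ℤ)+1 = b - 1) by omega), sub_zero]
      rw [v1, v2, v3, lie_zero, sub_zero, if_pos h1,
        if_neg (show ¬ (b = a + ((m+1:ℕ):ℤ) + 1) by push_cast; omega), sub_zero,
        show m+1+n+1 = m+n+2 by omega]
    by_cases h2 : b = a + (m:ℤ) + 2
    · have v1 : ⁅HH m a, HH n b⁆ = 0 := by
        rw [IHm n a b, if_neg h1, if_neg (show ¬ (b = a + (m:ℤ) + 1) by omega), sub_zero]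
      have v2 : ⁅qq (a+(m:ℤ)+1), HH n b⁆ = - HH (n+1) (b-1) := by
        rw [lemA n b (a+(m:ℤ)+1), if_neg (show ¬ (a+(m:ℤ)+1 = b + (n:ℤ) + 1) by omega),
          if_pos (show a+(m:ℤ)+1 = b - 1 by omega), zero_sub]
      have v4 : ⁅HH m a, HH (n+1) (b-1)⁆ = - HH (m+n+2) a := by
        rw [IHm (n+1) a (b-1),
          if_neg (show ¬ (a = b - 1 + ((n+1:ℕ):ℤ) + 1) by push_cast; omega),
          if_pos (show b - 1 = a + (m:ℤ) + 1 by omega), zero_sub,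
          show m+(n+1)+1 = m+n+2 by omega]
      rw [v1, v2, lie_zero, zero_sub, lie_neg, v4, neg_neg, if_neg h1,
        if_pos (show b = a + ((m+1:ℕ):ℤ) + 1 by push_cast; omega), zero_sub,
        show m+1+n+1 = m+n+2 by omega]
    by_cases h3 : a + (m:ℤ) + 1 = b + (n:ℤ) + 1
    · have v1 : ⁅HH m a, HH n b⁆ = 0 := by
        rw [IHm n a b, if_neg h1, if_neg (show ¬ (b = a + (m:ℤ) + 1) by omega), sub_zero]
      have v2 : ⁅qq (a+(m:ℤ)+1), HH n b⁆ = HH (n+1) b := by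
        rw [lemA n b (a+(m:ℤ)+1), if_pos h3,
          if_neg (show ¬ (a+(m:ℤ)+1 = b - 1) by omega), sub_zero]
      have v5 : ⁅HH m a, HH (n+1) b⁆ = 0 := by
        rw [IHm (n+1) a b, if_neg (show ¬ (a = b + ((n+1:ℕ):ℤ) + 1) by push_cast; omega),
          if_neg (show ¬ (b = a + (m:ℤ) + 1) by omega), sub_zero]
      rw [v1, v2, lie_zero, v5, sub_zero, if_neg h1,
        if_neg (show ¬ (b = a + ((m+1:ℕ):ℤ) + 1) by push_cast; omega), sub_zero]
    by_cases h4 : b = a + (m:ℤ) + 1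
    · have v1 : ⁅HH m a, HH n b⁆ = - HH (m+n+1) a := by
        rw [IHm n a b, if_neg h1, if_pos h4, zero_sub]
      have v2 : ⁅qq (a+(m:ℤ)+1), HH n b⁆ = 0 := by
        rw [lemA n b (a+(m:ℤ)+1), if_neg (show ¬ (a+(m:ℤ)+1 = b + (n:ℤ) + 1) by omega),
          if_neg (show ¬ (a+(m:ℤ)+1 = b - 1) by omega), sub_zero]
      have v3 : ⁅qq (a+(m:ℤ)+1), HH (m+n+1) a⁆ = 0 := by
        rw [lemA (m+n+1) a (a+(m:ℤ)+1),
          if_neg (show ¬ (a+(m:ℤ)+1 = a + ((m+n+1:ℕ):ℤ) + 1) by push_cast; omega),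
          if_neg (show ¬ (a+(m:ℤ)+1 = a - 1) by omega), sub_zero]
      rw [v1, v2, lie_neg, v3, neg_zero, lie_zero, sub_zero, if_neg h1,
        if_neg (show ¬ (b = a + ((m+1:ℕ):ℤ) + 1) by push_cast; omega), sub_zero]
    · have v1 : ⁅HH m a, HH n b⁆ = 0 := by
        rw [IHm n a b, if_neg h1, if_neg h4, sub_zero]
      have v2 : ⁅qq (a+(m:ℤ)+1), HH n b⁆ = 0 := by
        rw [lemA n b (a+(m:ℤ)+1), if_neg h3,
          if_neg (show ¬ (a+(m:ℤ)+1 = b - 1) by omega), sub_zero]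
      rw [v1, v2, lie_zero, lie_zero, sub_zero, if_neg h1,
        if_neg (show ¬ (b = a + ((m+1:ℕ):ℤ) + 1) by push_cast; omega), sub_zero]

end SerreAux

namespace SerreAux

lemma Eop_apply (a b : ℤ) (v : ℤ →₀ ℚ) : Eop a b v = Finsupp.single a (v b) := rfl

lemma Eop_mul (a b c d : ℤ) : Eop a b * Eop c d = if b = c then Eop a d else 0 := by
  apply LinearMap.ext
  intro v
  rw [Module.End.mul_apply, Eop_apply, Eop_apply, Finsupp.single_apply]
  by_cases h : b = c
  · subst h
    rw [if_pos rfl, if_pos rfl]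
    rfl
  · rw [if_neg h, if_neg (fun hh => h hh.symm), Finsupp.single_zero]
    rfl

lemma lie_Eop (a b c d : ℤ) : ⁅Eop a b, Eop c d⁆ =
    (if b = c then Eop a d else 0) - (if d = a then Eop c b else 0) := by
  rw [Ring.lie_def, Eop_mul, Eop_mul]

lemma phi_ff (i : ℤ) : phiSL (ff i) = Eop (i+1) i :=
  FreeLieAlgebra.lift_of_apply _ _

lemma phi_GG : ∀ (n : ℕ) (b : ℤ), phiSL (GG n b) = Eop (b + n + 1) b := by
  intro n
  induction n with
  | zero =>
    intro b
    rw [show GG 0 b = ff b from rfl, phi_ff]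
    norm_num
  | succ n IH =>
    intro b
    rw [show GG (n+1) b = ⁅ff (b + (n:ℤ) + 1), GG n b⁆ from rfl, LieHom.map_lie, phi_ff, IH,
      lie_Eop, if_pos rfl, if_neg (show ¬ (b = b + (n:ℤ) + 1 + 1) by omega), sub_zero]
    congr 1
    push_cast
    ring

lemma serre_ker : ∀ x ∈ serreRels, phiSL x = 0 := by
  rintro x ((⟨i, rfl⟩ | ⟨i, rfl⟩) | ⟨i, j, hij, rfl⟩)
  · have inner : ⁅Eop (i+1) i, Eop (i+1+1) (i+1)⁆ = -(Eop (i+1+1) i) := by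
      rw [lie_Eop, if_neg (show ¬ (i = i+1+1) by omega), if_pos rfl, zero_sub]
    have outer : ⁅Eop (i+1) i, Eop (i+1+1) i⁆ = 0 := by
      rw [lie_Eop, if_neg (show ¬ (i = i+1+1) by omega),
        if_neg (show ¬ (i = i+1) by omega), sub_zero]
    rw [LieHom.map_lie, LieHom.map_lie,
      show phiSL (FreeLieAlgebra.of ℚ i) = Eop (i+1) i from phi_ff i,
      show phiSL (FreeLieAlgebra.of ℚ (i+1)) = Eop (i+1+1) (i+1) from phi_ff (i+1),
      inner, lie_neg, outer, neg_zero]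
  · have inner : ⁅Eop (i+1) i, Eop (i-1+1) (i-1)⁆ = Eop (i+1) (i-1) := by
      rw [lie_Eop, if_pos (show i = i-1+1 by omega),
        if_neg (show ¬ (i-1 = i+1) by omega), sub_zero]
    have outer : ⁅Eop (i+1) i, Eop (i+1) (i-1)⁆ = 0 := by
      rw [lie_Eop, if_neg (show ¬ (i = i+1) by omega),
        if_neg (show ¬ (i-1 = i+1) by omega), sub_zero]
    rw [LieHom.map_lie, LieHom.map_lie,
      show phiSL (FreeLieAlgebra.of ℚ i) = Eop (i+1) i from phi_ff i,
      show phiSL (FreeLieAlgebra.of ℚ (i-1)) = Eop (i-1+1) (i-1) from phi_ff (i-1),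
      inner, outer]
  · have hij' : i ≠ j + 1 ∧ j ≠ i + 1 := by
      rcases lt_abs.mp hij with h | h
      exacts [⟨by omega, by omega⟩, ⟨by omega, by omega⟩]
    rw [LieHom.map_lie, show phiSL (FreeLieAlgebra.of ℚ i) = Eop (i+1) i from phi_ff i,
      show phiSL (FreeLieAlgebra.of ℚ j) = Eop (j+1) j from phi_ff j, lie_Eop,
      if_neg (show ¬ (i = j + 1) from hij'.1), if_neg (show ¬ (j = i + 1) from hij'.2),
      sub_zero]

lemma span_le_ker : Isl ≤ phiSL.ker :=
  (LieSubmodule.lieSpan_le).mpr (fun x hx => LieHom.mem_ker.mpr (serre_ker x hx))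

lemma eval_Eop (x y a z : ℤ) (r : ℚ) :
    (Eop x y (Finsupp.single a r)) z = if y = a ∧ x = z then r else 0 := by
  rw [Eop_apply, Finsupp.single_apply, Finsupp.single_apply]
  by_cases h1 : x = z
  · by_cases h2 : a = y
    · rw [if_pos h1, if_pos h2, if_pos ⟨h2.symm, h1⟩]
    · rw [if_pos h1, if_neg h2, if_neg (fun hh => h2 hh.1.symm)]
  · rw [if_neg h1, if_neg (fun hh => h1 hh.2)]

lemma coeff_zero (c : (ℕ × ℤ) →₀ ℚ)
    (h : (c.sum fun p q => q • Eop (p.2 + p.1 + 1) p.2) = 0) : c = 0 := by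
  ext p
  obtain ⟨m, a⟩ := p
  have h2 := congrArg (fun T : Module.End ℚ (ℤ →₀ ℚ) =>
    (T (Finsupp.single a 1)) (a + m + 1)) h
  simp only [Finsupp.sum, LinearMap.coe_sum, Finset.sum_apply, LinearMap.smul_apply,
    Finsupp.finset_sum_apply, Finsupp.smul_apply, eval_Eop, LinearMap.zero_apply,
    Finsupp.coe_zero, Pi.zero_apply, smul_eq_mul] at h2
  rw [Finset.sum_eq_single (m, a)] at h2
  · rw [if_pos ⟨rfl, rfl⟩, mul_one] at h2
    simpa using h2
  · rintro ⟨m', a'⟩ hmem hne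
    rw [if_neg, mul_zero]
    rintro ⟨hh1, hh2⟩
    simp only at hh1 hh2
    apply hne
    have : m' = m := by omega
    rw [this, hh1]
  · intro hns
    simp [Finsupp.notMem_support_iff.1 hns]

lemma phi_vanish (s : FrL)
    (hs : s ∈ Submodule.span ℚ (Set.range fun p : ℕ × ℤ => GG p.1 p.2))
    (h0 : phiSL s = 0) : s = 0 := by
  obtain ⟨c, rfl⟩ := Finsupp.mem_span_range_iff_exists_finsupp.1 hs
  have h1 : (c.sum fun p q => q • Eop (p.2 + p.1 + 1) p.2) = 0 := by
    rw [← h0, show (phiSL (c.sum fun p q => q • GG p.1 p.2))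
        = phiSL.toLinearMap (c.sum fun p q => q • GG p.1 p.2) from rfl, map_finsuppSum]
    refine Finsupp.sum_congr ?_
    intro p _
    rw [map_smul]
    rw [show phiSL.toLinearMap (GG p.1 p.2) = phiSL (GG p.1 p.2) from rfl, phi_GG]
  rw [coeff_zero c h1, Finsupp.sum_zero_index]

end SerreAux

namespace SerreAux

noncomputable def MS : Submodule ℚ QL :=
  Submodule.span ℚ (Set.range fun p : ℕ × ℤ => HH p.1 p.2)

lemma lie_mem_MS : ∀ x ∈ MS, ∀ y ∈ MS, ⁅x, y⁆ ∈ MS := by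
  intro x hx y hy
  refine Submodule.span_induction₂ (p := fun x y _ _ => ⁅x, y⁆ ∈ MS)
    ?_ ?_ ?_ ?_ ?_ ?_ ?_ hx hy
  · rintro _ _ ⟨⟨m, a⟩, rfl⟩ ⟨⟨n, b⟩, rfl⟩
    simp only
    rw [lemB m n a b]
    refine sub_mem ?_ ?_ <;> split_ifs <;>
      first
        | exact Submodule.zero_mem _
        | exact Submodule.subset_span ⟨(_, _), rfl⟩
  · intro y _; rw [zero_lie]; exact Submodule.zero_mem _
  · intro x _; rw [lie_zero]; exact Submodule.zero_mem _
  · intro x y z _ _ _ h1 h2; rw [add_lie]; exact Submodule.add_mem _ h1 h2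
  · intro x y z _ _ _ h1 h2; rw [lie_add]; exact Submodule.add_mem _ h1 h2
  · intro r x y _ _ h1; rw [smul_lie]; exact Submodule.smul_mem _ r h1
  · intro r x y _ _ h1; rw [lie_smul]; exact Submodule.smul_mem _ r h1

noncomputable def KK : LieSubalgebra ℚ QL :=
  { MS with lie_mem' := fun {x y} hx hy => lie_mem_MS x hx y hy }

lemma mem_MS (z : QL) : z ∈ MS := by
  have hcomp : KK.incl.comp (FreeLieAlgebra.lift ℚ
      (fun i : ℤ => (⟨HH 0 i, Submodule.subset_span ⟨(0, i), rfl⟩⟩ : KK))) = piQ := by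
    apply FreeLieAlgebra.hom_ext
    intro i
    rw [LieHom.comp_apply, FreeLieAlgebra.lift_of_apply]
    rfl
  obtain ⟨x, rfl⟩ := Submodule.Quotient.mk_surjective (Isl : Submodule ℚ FrL) z
  have hx := LieHom.congr_fun hcomp x
  rw [LieHom.comp_apply] at hx
  have : Submodule.Quotient.mk (p := (Isl : Submodule ℚ FrL)) x = piQ x := rfl
  rw [this, ← hx]
  exact ((FreeLieAlgebra.lift ℚ
    (fun i : ℤ => (⟨HH 0 i, Submodule.subset_span ⟨(0, i), rfl⟩⟩ : KK))) x).2

lemma ker_eq : phiSL.ker = LieSubmodule.lieSpan ℚ FrL serreRels := by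
  refine le_antisymm ?_ span_le_ker
  intro x hx
  have hphix : phiSL x = 0 := LieHom.mem_ker.1 hx
  have hq : piQ x ∈ MS := mem_MS _
  have hMS : MS = Submodule.map (Isl : Submodule ℚ FrL).mkQ
      (Submodule.span ℚ (Set.range fun p : ℕ × ℤ => GG p.1 p.2)) := by
    rw [Submodule.map_span]
    rw [← Set.range_comp]
    rfl
  rw [hMS] at hq
  obtain ⟨s, hs, hsx⟩ := hq
  have hxs : x - s ∈ Isl := by
    have h0 : (Isl : Submodule ℚ FrL).mkQ (x - s) = 0 := by
      rw [map_sub, hsx]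
      exact sub_self _
    exact (Submodule.Quotient.mk_eq_zero _).1 h0
  have hphixs : phiSL (x - s) = 0 := LieHom.mem_ker.1 (span_le_ker hxs)
  have hphis : phiSL s = 0 := by
    have h1 : phiSL (x - s) = phiSL x - phiSL s := phiSL.map_sub x s
    rw [hphix, zero_sub] at h1
    rw [← neg_neg (phiSL s), ← h1, hphixs, neg_zero]
  have hs0 : s = 0 := phi_vanish s hs hphis
  rw [hs0, sub_zero] at hxs
  exact hxs

def genS : Set (Module.End ℚ (ℤ →₀ ℚ)) := {x | ∃ a b : ℤ, b < a ∧ x = Eop a b}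

lemma lie_mem_genS : ∀ x ∈ Submodule.span ℚ genS, ∀ y ∈ Submodule.span ℚ genS,
    ⁅x, y⁆ ∈ Submodule.span ℚ genS := by
  intro x hx y hy
  refine Submodule.span_induction₂ (p := fun x y _ _ => ⁅x, y⁆ ∈ Submodule.span ℚ genS)
    ?_ ?_ ?_ ?_ ?_ ?_ ?_ hx hy
  · rintro _ _ ⟨a, b, hba, rfl⟩ ⟨c, d, hdc, rfl⟩
    rw [lie_Eop]
    refine sub_mem ?_ ?_ <;> split_ifs with h
    · exact Submodule.subset_span ⟨a, d, by omega, rfl⟩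
    · exact Submodule.zero_mem _
    · exact Submodule.subset_span ⟨c, b, by omega, rfl⟩
    · exact Submodule.zero_mem _
  · intro y _; rw [zero_lie]; exact Submodule.zero_mem _
  · intro x _; rw [lie_zero]; exact Submodule.zero_mem _
  · intro x y z _ _ _ h1 h2; rw [add_lie]; exact Submodule.add_mem _ h1 h2
  · intro x y z _ _ _ h1 h2; rw [lie_add]; exact Submodule.add_mem _ h1 h2
  · intro r x y _ _ h1; rw [smul_lie]; exact Submodule.smul_mem _ r h1
  · intro r x y _ _ h1; rw [lie_smul]; exact Submodule.smul_mem _ r h1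

noncomputable def SS : LieSubalgebra ℚ (Module.End ℚ (ℤ →₀ ℚ)) :=
  { Submodule.span ℚ genS with lie_mem' := fun {x y} hx hy => lie_mem_genS x hx y hy }

lemma range_sub (x : FrL) : phiSL x ∈ Submodule.span ℚ genS := by
  have hcomp : SS.incl.comp (FreeLieAlgebra.lift ℚ
      (fun i : ℤ => (⟨Eop (i+1) i, Submodule.subset_span ⟨i+1, i, by omega, rfl⟩⟩ : SS)))
      = phiSL := by
    apply FreeLieAlgebra.hom_ext
    intro i
    rw [LieHom.comp_apply, FreeLieAlgebra.lift_of_apply,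
      show phiSL (FreeLieAlgebra.of ℚ i) = Eop (i+1) i from phi_ff i]
    rfl
  have hx := LieHom.congr_fun hcomp x
  rw [LieHom.comp_apply] at hx
  rw [← hx]
  exact ((FreeLieAlgebra.lift ℚ
    (fun i : ℤ => (⟨Eop (i+1) i, Submodule.subset_span ⟨i+1, i, by omega, rfl⟩⟩ : SS))) x).2

lemma range_eq : (phiSL.range : Set (Module.End ℚ (ℤ →₀ ℚ)))
    = ↑(Submodule.span ℚ genS) := by
  ext z
  constructor
  · intro hz
    obtain ⟨x, rfl⟩ := hz
    exact range_sub x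
  · intro hz
    have hle : Submodule.span ℚ genS ≤ (phiSL.range : Submodule ℚ (Module.End ℚ (ℤ →₀ ℚ))) := by
      rw [Submodule.span_le]
      rintro _ ⟨a, b, hba, rfl⟩
      have heq : Eop a b = phiSL (GG (a - b - 1).toNat b) := by
        rw [phi_GG]
        congr 1
        omega
      rw [heq]
      exact phiSL.mem_range_self _
    exact hle hz

end SerreAux

theorem free_lie_quotient_iso_lowerTriangular :
    phiSL.ker = LieSubmodule.lieSpan ℚ (FreeLieAlgebra ℚ ℤ) serreRels ∧
    (phiSL.range : Set (Module.End ℚ (ℤ →₀ ℚ)))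
      = ↑(Submodule.span ℚ {x : Module.End ℚ (ℤ →₀ ℚ) | ∃ a b : ℤ, b < a ∧ x = Eop a b}) := by
  exact ⟨SerreAux.ker_eq, SerreAux.range_eq⟩
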